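/- In the ILP formulation for MSR on the extended graph, the flow constraints (for every node u ≠ v_aux, the sum of x_e over incoming edges equals the sum of x_e over outgoing edges plus 1, with 0 ≤ x_e ≤ |V| and x_e ≤ (|V|-1)·I_e for binary I_e) imply that the support {e : x_e > 0} contains, for every node u, a path from v_aux to u, and Σ_e r_e·x_e equals the sum over all nodes of their path retrieval costs when the support is a spanning arborescence. -/

import Mathlib

/-- ILP flow constraints for MSR on the extended graph with auxiliary root
`v_aux` (encoded as `none`): `x u v` counts how many versions are retrieved
through the edge `(u, v)`, and flow conservation demands, for every version `u`,
incoming flow = outgoing flow + 1.  Claims: (a) the support `{e : x_e > 0}`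
contains, for every version `u`, a path from `v_aux` to `u`; (b) when the support
is a spanning arborescence given by the parent map `par` — with `x` on the edge
into `v` equal to the number `dep v` of descendants of `v` (including `v`), edge
retrieval costs `r` with auxiliary edges of retrieval cost `0`, and `Rv v` the
retrieval cost of the path from `v_aux` to `v` — the ILP objective `∑ r_e · x_e`
equals the total retrieval cost `∑_v R(v)`. -/
theorem ilp_flow_support_and_objective (n : ℕ)
    (x r : Option (Fin n) → Option (Fin n) → ℕ)
    (hflow : ∀ u : Fin n,
      (∑ w : Option (Fin n), x w (some u)) = (∑ w : Option (Fin n), x (some u) w) + 1) :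
    (∀ u : Fin n, ∃ (k : ℕ) (p : ℕ → Option (Fin n)),
      p 0 = none ∧ p k = some u ∧ ∀ i < k, 0 < x (p i) (p (i + 1))) ∧
    (∀ (par : Fin n → Option (Fin n)) (dep Rv : Fin n → ℕ),
      (∀ v : Fin n, r none (some v) = 0) →
      (∀ v : Fin n, dep v = 1 + ∑ w : Fin n, if par w = some v then dep w else 0) →
      (∀ v : Fin n, par v = none → Rv v = 0) →
      (∀ v u : Fin n, par v = some u → Rv v = Rv u + r (some u) (some v)) →
      (∀ (w : Option (Fin n)) (v : Fin n), x w (some v) = if par v = w then dep v else 0) →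
      (∀ w : Option (Fin n), x w none = 0) →
      (∑ u : Option (Fin n), ∑ v : Option (Fin n), r u v * x u v) = ∑ v : Fin n, Rv v) := by
  classical
  have parta : ∀ u : Fin n, ∃ (k : ℕ) (p : ℕ → Option (Fin n)),
      p 0 = none ∧ p k = some u ∧ ∀ i < k, 0 < x (p i) (p (i + 1)) := by
    classical
    set reach : Option (Fin n) → Prop := fun t => ∃ (k : ℕ) (p : ℕ → Option (Fin n)),
        p 0 = none ∧ p k = t ∧ ∀ i < k, 0 < x (p i) (p (i + 1)) with hreach
    have reach_none : reach none := ⟨0, fun _ => none, rfl, rfl, by omega⟩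
    have reach_step : ∀ t s, reach t → 0 < x t s → reach s := by
      rintro t s ⟨k, p, h0, hk, hsup⟩ hpos
      refine ⟨k + 1, fun i => if i ≤ k then p i else s, by simp [h0], by simp, ?_⟩
      intro i hi
      rcases Nat.lt_succ_iff_lt_or_eq.mp hi with h | h
      · simpa [Nat.le_of_lt h, Nat.succ_le_of_lt h] using hsup i h
      · subst h
        simpa [hk] using hpos
    suffices h : ∀ u : Fin n, reach (some u) by exact h
    by_contra hc
    push_neg at hc
    set S : Finset (Fin n) := Finset.univ.filter (fun u => ¬ reach (some u)) with hS
    have hSne : S.Nonempty := by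
      obtain ⟨u, hu⟩ := hc
      exact ⟨u, by simp [hS, hu]⟩
    have hin : ∀ u ∈ S, (∑ w : Option (Fin n), x w (some u)) = ∑ v ∈ S, x (some v) (some u) := by
      intro u hu
      have hu' : ¬ reach (some u) := by simpa [hS] using hu
      rw [Fintype.sum_option]
      have h1 : x none (some u) = 0 := by
        by_contra h
        exact hu' (reach_step _ _ reach_none (Nat.pos_of_ne_zero h))
      rw [h1, zero_add]
      rw [← Finset.sum_filter_add_sum_filter_not Finset.univ (fun v => ¬ reach (some v))]
      have h2 : ∑ v ∈ Finset.univ.filter (fun v => ¬¬ reach (some v)), x (some v) (some u) = 0 := by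
        apply Finset.sum_eq_zero
        intro v hv
        have hv' : reach (some v) := by simpa using (Finset.mem_filter.mp hv).2
        by_contra h
        exact hu' (reach_step _ _ hv' (Nat.pos_of_ne_zero h))
      rw [h2, add_zero]
    have hout : ∀ u ∈ S, (∑ v ∈ S, x (some u) (some v)) ≤ ∑ w : Option (Fin n), x (some u) w := by
      intro u _
      have : ∑ v ∈ S, x (some u) (some v) = ∑ w ∈ S.image some, x (some u) w := by
        rw [Finset.sum_image]
        intro a _ b _ h
        exact Option.some_injective _ h
      rw [this]
      exact Finset.sum_le_sum_of_subset (Finset.subset_univ _)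
    have key : (∑ u ∈ S, ∑ v ∈ S, x (some v) (some u))
        = (∑ u ∈ S, ∑ w : Option (Fin n), x (some u) w) + S.card := by
      calc ∑ u ∈ S, ∑ v ∈ S, x (some v) (some u)
          = ∑ u ∈ S, ∑ w : Option (Fin n), x w (some u) := by
            exact Finset.sum_congr rfl (fun u hu => (hin u hu).symm)
        _ = ∑ u ∈ S, ((∑ w : Option (Fin n), x (some u) w) + 1) := by
            exact Finset.sum_congr rfl (fun u _ => hflow u)
        _ = (∑ u ∈ S, ∑ w : Option (Fin n), x (some u) w) + S.card := by
            rw [Finset.sum_add_distrib, Finset.sum_const, smul_eq_mul, mul_one]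
    have hle : (∑ u ∈ S, ∑ v ∈ S, x (some u) (some v)) ≤ ∑ u ∈ S, ∑ w : Option (Fin n), x (some u) w :=
      Finset.sum_le_sum hout
    rw [Finset.sum_comm] at hle
    have hcard : S.card = 0 := by omega
    exact absurd (Finset.card_ne_zero_of_mem hSne.choose_spec) (by omega)
  refine ⟨parta, ?_⟩
  intro par dep Rv hr0 hdep hRv0 hRv hx hxn
  classical
  -- Step 1: objective reduces to ∑ v, r (par v) (some v) * dep v
  have hobj : (∑ u : Option (Fin n), ∑ v : Option (Fin n), r u v * x u v)
      = ∑ v : Fin n, r (par v) (some v) * dep v := by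
    calc (∑ u : Option (Fin n), ∑ v : Option (Fin n), r u v * x u v)
        = ∑ u : Option (Fin n), ∑ v : Fin n, r u (some v) * x u (some v) := by
          refine Finset.sum_congr rfl fun u _ => ?_
          rw [Fintype.sum_option]; simp [hxn]
      _ = ∑ v : Fin n, ∑ u : Option (Fin n), r u (some v) * x u (some v) := Finset.sum_comm
      _ = ∑ v : Fin n, r (par v) (some v) * dep v := by
          refine Finset.sum_congr rfl fun v _ => ?_
          simp only [hx, mul_ite, mul_zero]
          rw [Finset.sum_ite_eq Finset.univ (par v) (fun u => r u (some v) * dep v)]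
          simp
  rw [hobj]
  -- the successor map on the extended graph
  set F : Option (Fin n) → Option (Fin n) := fun t => Option.bind t par with hFdef
  have hFs : ∀ v : Fin n, F (some v) = par v := fun v => rfl
  have hFn : F none = none := rfl
  -- every node's parent chain reaches none
  have hedge : ∀ t s, 0 < x t s → ∃ v : Fin n, s = some v ∧ par v = t := by
    intro t s hpos
    cases s with
    | none => rw [hxn] at hpos; omega
    | some v =>
      refine ⟨v, rfl, ?_⟩
      rw [hx] at hpos
      by_contra h
      rw [if_neg h] at hpos; omega
  have hex : ∀ t : Option (Fin n), ∃ k, F^[k] t = none := by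
    intro t
    cases t with
    | none => exact ⟨0, rfl⟩
    | some u =>
      obtain ⟨k, p, h0, hk, hs⟩ := parta u
      have hiter : ∀ i, i ≤ k → F^[i] (p k) = p (k - i) := by
        intro i
        induction i with
        | zero => simp
        | succ i ih =>
          intro hik
          have h1 : F^[i] (p k) = p (k - i) := ih (by omega)
          rw [Function.iterate_succ_apply', h1]
          obtain ⟨v, hv, hpv⟩ := hedge _ _ (hs (k - (i + 1)) (by omega))
          have hki : k - i = (k - (i + 1)) + 1 := by omega
          rw [hki, hv, hFs, hpv]
      refine ⟨k, ?_⟩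
      have := hiter k le_rfl
      rw [Nat.sub_self, h0, hk] at this
      exact this
  -- depth
  set dpt : Option (Fin n) → ℕ := fun t => Nat.find (hex t) with hdptdef
  have dspec : ∀ t, F^[dpt t] t = none := fun t => Nat.find_spec (hex t)
  have dmin : ∀ t k, F^[k] t = none → dpt t ≤ k := fun t k h => Nat.find_min' (hex t) h
  have dpos : ∀ v : Fin n, 0 < dpt (some v) := by
    intro v
    apply Nat.pos_of_ne_zero
    intro h
    have := dspec (some v); rw [h] at this; simp at this
  have hstep : ∀ (v : Fin n) t, F (some v) = t → dpt (some v) = dpt t + 1 := by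
    intro v t hft
    have h1 : dpt (some v) ≤ dpt t + 1 := by
      apply dmin
      rw [Function.iterate_succ_apply, hft]
      exact dspec t
    have h2 : dpt t ≤ dpt (some v) - 1 := by
      apply dmin
      have h3 : F^[dpt (some v)] (some v) = none := dspec _
      have h4 : dpt (some v) = (dpt (some v) - 1) + 1 := by have := dpos v; omega
      rw [h4, Function.iterate_succ_apply, hft] at h3
      exact h3
    have := dpos v
    omega
  have hchain : ∀ (j : ℕ) (v w : Fin n), F^[j] (some v) = some w →
      dpt (some v) = dpt (some w) + j := by
    intro j
    induction j with
    | zero => intro v w h; simp at h; subst h; simp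
    | succ j ih =>
      intro v w h
      rw [Function.iterate_succ_apply'] at h
      cases hmid : F^[j] (some v) with
      | none => rw [hmid, hFn] at h; exact absurd h (by simp)
      | some t =>
        rw [hmid] at h
        have h1 := hstep t (some w) h
        have h2 := ih v t hmid
        omega
  -- descendant sets
  set D : Fin n → Finset (Fin n) :=
    fun u => Finset.univ.filter (fun v => ∃ j, F^[j] (some v) = some u) with hDdef
  have hD : ∀ (v u : Fin n), v ∈ D u ↔ ∃ j, F^[j] (some v) = some u := by
    intro v u; rw [hDdef]; simp
  have sum_desc : ∀ (f : Fin n → ℕ) (u : Fin n),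
      (∑ v ∈ D u, f v) = f u + ∑ w : Fin n, (if par w = some u then ∑ v ∈ D w, f v else 0) := by
    intro f u
    have hL : ∀ (s : Finset (Fin n)), (∑ v ∈ s, f v) = ∑ v : Fin n, (if v ∈ s then f v else 0) := by
      intro s
      rw [Finset.sum_ite_mem Finset.univ s f, Finset.univ_inter]
    have push : ∀ (w : Fin n), (if par w = some u then ∑ v ∈ D w, f v else 0)
        = ∑ v : Fin n, (if par w = some u then (if v ∈ D w then f v else 0) else 0) := by
      intro w
      split
      · exact hL (D w)
      · simp
    have hfu : f u = ∑ v : Fin n, (if v = u then f v else 0) := by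
      rw [Finset.sum_ite_eq' Finset.univ u f]; simp
    rw [hL (D u), hfu]
    calc (∑ v : Fin n, if v ∈ D u then f v else 0)
        = ∑ v : Fin n, ((if v = u then f v else 0)
            + ∑ w : Fin n, (if par w = some u then (if v ∈ D w then f v else 0) else 0)) := by
          refine Finset.sum_congr rfl fun v _ => ?_
          by_cases hvu : v = u
          · subst hvu
            have hmem : v ∈ D v := (hD v v).mpr ⟨0, rfl⟩
            rw [if_pos hmem, if_pos rfl]
            have : (∑ w : Fin n, (if par w = some v then (if v ∈ D w then f v else 0) else 0)) = 0 := by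
              apply Finset.sum_eq_zero
              intro w _
              split
              · split
                · next hch hm =>
                  obtain ⟨j, hj⟩ := (hD v w).mp hm
                  have h1 := hchain j v w hj
                  have h2 := hstep w (some v) (by rw [hFs]; exact hch)
                  omega
                · rfl
              · rfl
            rw [this, add_zero]
          · rw [if_neg hvu, zero_add]
            by_cases hvd : v ∈ D u
            · rw [if_pos hvd]
              obtain ⟨j, hj⟩ := (hD v u).mp hvd
              have hj0 : j ≠ 0 := by
                intro h; rw [h] at hj; simp at hj; exact hvu hj
              obtain ⟨j', rfl⟩ : ∃ j', j = j' + 1 := ⟨j - 1, by omega⟩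
              rw [Function.iterate_succ_apply'] at hj
              cases hmid : F^[j'] (some v) with
              | none => rw [hmid, hFn] at hj; exact absurd hj (by simp)
              | some w0 =>
                rw [hmid] at hj
                have hch0 : par w0 = some u := by rw [← hFs]; exact hj
                have hm0 : v ∈ D w0 := (hD v w0).mpr ⟨j', hmid⟩
                rw [Finset.sum_eq_single w0]
                · rw [if_pos hch0, if_pos hm0]
                · intro w _ hww
                  split
                  · split
                    · next hch hm =>
                      obtain ⟨j2, hj2⟩ := (hD v w).mp hm
                      have e1 := hchain j2 v w hj2
                      have e2 := hchain j' v w0 hmid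
                      have e3 := hstep w (some u) (by rw [hFs]; exact hch)
                      have e4 := hstep w0 (some u) (by rw [hFs]; exact hch0)
                      have hjj : j2 = j' := by omega
                      rw [hjj, hmid] at hj2
                      simp at hj2
                      exact absurd hj2.symm hww
                    · rfl
                  · rfl
                · intro h; exact absurd (Finset.mem_univ w0) h
            · rw [if_neg hvd]
              symm
              apply Finset.sum_eq_zero
              intro w _
              split
              · split
                · next hch hm =>
                  obtain ⟨j, hj⟩ := (hD v w).mp hm
                  exfalso
                  apply hvd
                  refine (hD v u).mpr ⟨j + 1, ?_⟩
                  rw [Function.iterate_succ_apply', hj, hFs]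
                  exact hch
                · rfl
              · rfl
      _ = (∑ v : Fin n, if v = u then f v else 0)
            + ∑ v : Fin n, ∑ w : Fin n, (if par w = some u then (if v ∈ D w then f v else 0) else 0) :=
          Finset.sum_add_distrib
      _ = (∑ v : Fin n, if v = u then f v else 0)
            + ∑ w : Fin n, (if par w = some u then ∑ v ∈ D w, f v else 0) := by
          rw [Finset.sum_comm]
          congr 1
          exact Finset.sum_congr rfl fun w _ => (push w).symm
  -- key identity on subtrees
  have keyAux : ∀ (m : ℕ) (u : Fin n),
      (Finset.univ.sup fun v : Fin n => dpt (some v)) < dpt (some u) + m →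
      (∑ v ∈ D u, Rv v) + r (par u) (some u) * dep u
        = Rv u * dep u + ∑ v ∈ D u, r (par v) (some v) * dep v := by
    intro m
    induction m with
    | zero =>
      intro u hu
      have := Finset.le_sup (f := fun v : Fin n => dpt (some v)) (Finset.mem_univ u)
      omega
    | succ m ih =>
      intro u hu
      have E1 := sum_desc (fun v => Rv v) u
      have E2 := sum_desc (fun v => r (par v) (some v) * dep v) u
      have E3 : Rv u * dep u = Rv u + ∑ w : Fin n, (if par w = some u then Rv u * dep w else 0) := by
        rw [hdep u, mul_add, mul_one, Finset.mul_sum]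
        simp only [mul_ite, mul_zero]
      have E4 : (∑ w : Fin n, (if par w = some u then ∑ v ∈ D w, Rv v else 0))
          = ∑ w : Fin n, (if par w = some u then
              Rv u * dep w + ∑ v ∈ D w, r (par v) (some v) * dep v else 0) := by
        refine Finset.sum_congr rfl fun w _ => ?_
        by_cases hch : par w = some u
        · rw [if_pos hch, if_pos hch]
          have hd : dpt (some w) = dpt (some u) + 1 := hstep w (some u) (by rw [hFs]; exact hch)
          have ihw := ih w (by omega)
          have hRw : Rv w = Rv u + r (some u) (some w) := hRv w u hch
          have hcw : r (par w) (some w) = r (some u) (some w) := by rw [hch]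
          rw [hcw, hRw, add_mul] at ihw
          linarith
        · rw [if_neg hch, if_neg hch]
      have E5 : (∑ w : Fin n, (if par w = some u then
              Rv u * dep w + ∑ v ∈ D w, r (par v) (some v) * dep v else 0))
          = (∑ w : Fin n, (if par w = some u then Rv u * dep w else 0))
            + ∑ w : Fin n, (if par w = some u then ∑ v ∈ D w, r (par v) (some v) * dep v else 0) := by
        rw [← Finset.sum_add_distrib]
        refine Finset.sum_congr rfl fun w _ => ?_
        split <;> simp
      rw [E1, E2]
      linarith [E3, E4, E5]
  have key : ∀ u : Fin n,
      (∑ v ∈ D u, Rv v) + r (par u) (some u) * dep u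
        = Rv u * dep u + ∑ v ∈ D u, r (par v) (some v) * dep v := by
    intro u
    exact keyAux ((Finset.univ.sup fun v : Fin n => dpt (some v)) + 1) u (by omega)
  -- roots
  have hroot : ∀ v : Fin n, ∃ w : Fin n, (∃ j, F^[j] (some v) = some w) ∧ par w = none := by
    intro v
    have h1 : dpt (some v) - 1 < dpt (some v) := by have := dpos v; omega
    have h2 : F^[dpt (some v) - 1] (some v) ≠ none := by
      intro h
      have := dmin (some v) _ h
      omega
    obtain ⟨w, hw⟩ := Option.ne_none_iff_exists'.mp h2
    refine ⟨w, ⟨_, hw⟩, ?_⟩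
    have h3 : F^[dpt (some v) - 1 + 1] (some v) = none := by
      have h4 : dpt (some v) - 1 + 1 = dpt (some v) := by have := dpos v; omega
      rw [h4]
      exact dspec _
    rw [Function.iterate_succ_apply', hw, hFs] at h3
    exact h3
  choose rt hrt1 hrt2 using hroot
  have hdroot : ∀ w : Fin n, par w = none → dpt (some w) = 1 := by
    intro w hw
    have h1 : dpt (some w) ≤ 1 := by
      apply dmin
      rw [Function.iterate_one, hFs, hw]
    have := dpos w
    omega
  -- fiber decomposition over roots
  have hfib : ∀ (f : Fin n → ℕ),
      (∑ v : Fin n, f v) = ∑ u : Fin n, ∑ v ∈ Finset.univ.filter (fun v => rt v = u), f v :=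
    fun f => (Finset.sum_fiberwise Finset.univ rt f).symm
  have hfiber_eq : ∀ u : Fin n, par u = none →
      Finset.univ.filter (fun v => rt v = u) = D u := by
    intro u hu
    ext v
    simp only [Finset.mem_filter, Finset.mem_univ, true_and]
    rw [hD]
    constructor
    · rintro rfl
      exact hrt1 v
    · rintro ⟨j, hj⟩
      obtain ⟨j', hj'⟩ := hrt1 v
      have e1 := hchain j v u hj
      have e2 := hchain j' v (rt v) hj'
      have e3 := hdroot u hu
      have e4 := hdroot (rt v) (hrt2 v)
      have : j = j' := by omega
      rw [this, hj'] at hj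
      simp at hj
      exact hj
  rw [hfib Rv, hfib (fun v => r (par v) (some v) * dep v)]
  refine (Finset.sum_congr rfl fun u _ => ?_).symm
  by_cases hu : par u = none
  · rw [hfiber_eq u hu]
    have k := key u
    simp only [hu, hr0, hRv0 u hu, zero_mul, add_zero, zero_add] at k
    omega
  · have : Finset.univ.filter (fun v => rt v = u) = ∅ := by
      apply Finset.filter_eq_empty_iff.mpr
      intro v _ hv
      exact hu (hv ▸ hrt2 v)
    rw [this, Finset.sum_empty, Finset.sum_empty]
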